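/- Let M : E → Y be linear, C a nice closed convex cone, and x ∈ ri(C ∩ range M). If range(M) ⊆ span face(x, C), then M* C* is closed. -/

import Mathlib

open Pointwise
open Bornology Filter

/-- `F` is a face of the convex set `C`. -/
def IsFaceOf {M : Type*} [AddCommGroup M] [Module ℝ M] (F C : Set M) : Prop :=
  F ⊆ C ∧ Convex ℝ F ∧ ∀ x ∈ C, ∀ y ∈ C, ∀ t : ℝ, t ∈ Set.Ioo (0 : ℝ) 1 →
    t • x + (1 - t) • y ∈ F → x ∈ F ∧ y ∈ F

/-- The minimal face of `C` containing `S`. -/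
def minFace {M : Type*} [AddCommGroup M] [Module ℝ M] (S C : Set M) : Set M :=
  ⋂₀ {F | IsFaceOf F C ∧ S ⊆ F}

/-- The nonnegative polar cone of a set `C`. -/
def polarCone {M : Type*} [NormedAddCommGroup M] [InnerProductSpace ℝ M]
    (C : Set M) : Set M :=
  {y | ∀ x ∈ C, 0 ≤ (inner ℝ y x : ℝ)}

lemma isClosed_image_cone {Y E : Type*} [NormedAddCommGroup Y] [NormedSpace ℝ Y]
    [FiniteDimensional ℝ Y] [NormedAddCommGroup E] [NormedSpace ℝ E]
    (A : Y →ₗ[ℝ] E) (K : Set Y) (hK : IsClosed K)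
    (hcone : ∀ k ∈ K, ∀ t : ℝ, 0 ≤ t → t • k ∈ K)
    (hker : ∀ k ∈ K, A k = 0 → k = 0) : IsClosed (A '' K) := by
  classical
  have hAc : Continuous A := A.continuous_of_finiteDimensional
  by_cases hS : (K ∩ Metric.sphere (0:Y) 1).Nonempty
  · have hScomp : IsCompact (K ∩ Metric.sphere (0:Y) 1) :=
      (isCompact_sphere (0:Y) 1).of_isClosed_subset (hK.inter Metric.isClosed_sphere)
        Set.inter_subset_right
    obtain ⟨k₀, hk₀, hmin⟩ := hScomp.exists_isMinOn hS (hAc.norm.continuousOn)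
    set c : ℝ := ‖A k₀‖ with hc
    have hcpos : 0 < c := by
      rw [hc, norm_pos_iff]
      intro h0
      have := hker k₀ hk₀.1 h0
      have : ‖k₀‖ = 1 := by simpa using hk₀.2
      simp [hker k₀ hk₀.1 h0] at this
    have hbound : ∀ k ∈ K, c * ‖k‖ ≤ ‖A k‖ := by
      intro k hk
      rcases eq_or_ne k 0 with rfl | hne
      · simp
      · have hkn : (0:ℝ) < ‖k‖ := norm_pos_iff.2 hne
        have hmem : ‖k‖⁻¹ • k ∈ K ∩ Metric.sphere (0:Y) 1 := by
          refine ⟨hcone k hk _ (by positivity), ?_⟩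
          simp [norm_smul, abs_of_pos (inv_pos.2 hkn), inv_mul_cancel₀ hkn.ne']
        have := hmin hmem
        simp only [Set.mem_setOf_eq] at this
        have h2 : c ≤ ‖A (‖k‖⁻¹ • k)‖ := this
        rw [map_smul, norm_smul, norm_inv, norm_norm] at h2
        calc c * ‖k‖ ≤ (‖k‖⁻¹ * ‖A k‖) * ‖k‖ := by nlinarith
          _ = ‖A k‖ := by field_simp
    refine IsSeqClosed.isClosed ?_
    intro u y hu huy
    choose k hkK hkA using hu
    obtain ⟨R, hR⟩ : ∃ R, ∀ n, ‖u n‖ ≤ R := by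
      have := (Metric.isBounded_range_of_tendsto u huy)
      obtain ⟨R, hR⟩ := this.subset_closedBall 0
      exact ⟨R, fun n => by simpa [mem_closedBall_zero_iff] using hR ⟨n, rfl⟩⟩
    have hkb : ∀ n, k n ∈ K ∩ Metric.closedBall (0:Y) (c⁻¹ * R) := by
      intro n
      refine ⟨hkK n, ?_⟩
      rw [mem_closedBall_zero_iff]
      have h1 : c * ‖k n‖ ≤ ‖A (k n)‖ := hbound _ (hkK n)
      rw [hkA n] at h1
      have h2 : c * ‖k n‖ ≤ R := h1.trans (hR n)
      calc ‖k n‖ = c⁻¹ * (c * ‖k n‖) := by field_simp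
        _ ≤ c⁻¹ * R := mul_le_mul_of_nonneg_left h2 (inv_nonneg.2 hcpos.le)
    have hbdd : IsBounded (K ∩ Metric.closedBall (0:Y) (c⁻¹ * R)) :=
      (Metric.isBounded_closedBall).subset Set.inter_subset_right
    obtain ⟨a, ha, φ, hφ, hconv⟩ := tendsto_subseq_of_bounded hbdd hkb
    have haK : a ∈ K := by
      have hcl : IsClosed (K ∩ Metric.closedBall (0:Y) (c⁻¹ * R)) :=
        hK.inter Metric.isClosed_closedBall
      exact (hcl.closure_eq ▸ ha).1
    refine ⟨a, haK, ?_⟩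
    have h1 : Tendsto (fun n => A (k (φ n))) atTop (nhds (A a)) :=
      (hAc.tendsto a).comp hconv
    have h2 : Tendsto (fun n => u (φ n)) atTop (nhds y) :=
      huy.comp hφ.tendsto_atTop
    have h3 : (fun n => A (k (φ n))) = fun n => u (φ n) := by
      funext n; exact hkA (φ n)
    rw [h3] at h1
    exact tendsto_nhds_unique h1 h2
  · have hsub : K ⊆ {0} := by
      intro k hk
      by_contra hk0
      have hkn : (0:ℝ) < ‖k‖ := norm_pos_iff.2 hk0
      exact hS ⟨‖k‖⁻¹ • k, hcone k hk _ (by positivity),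
        by simp [norm_smul, abs_of_pos (inv_pos.2 hkn), inv_mul_cancel₀ hkn.ne']⟩
    have : (A '' K).Subsingleton := by
      intro a ⟨p, hp, hpa⟩ b ⟨q, hq, hqb⟩
      have hp0 : p = 0 := hsub hp
      have hq0 : q = 0 := hsub hq
      simp [← hpa, ← hqb, hp0, hq0]
    exact this.isClosed

section FaceLemmas

variable {V : Type*} [AddCommGroup V] [Module ℝ V]

lemma isFaceOf_self' {C : Set V} (h : Convex ℝ C) : IsFaceOf C C :=
  ⟨subset_rfl, h, fun a ha b hb _ _ _ => ⟨ha, hb⟩⟩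

lemma minFace_isFaceOf {S C : Set V} (hC : Convex ℝ C) (hS : S ⊆ C) :
    IsFaceOf (minFace S C) C := by
  refine ⟨Set.sInter_subset_of_mem ⟨isFaceOf_self' hC, hS⟩,
    convex_sInter fun F hF => hF.1.2.1, ?_⟩
  intro a ha b hb t ht hmem
  constructor <;> refine Set.mem_sInter.2 fun F hF => ?_
  · exact (hF.1.2.2 a ha b hb t ht (Set.mem_sInter.1 hmem F hF)).1
  · exact (hF.1.2.2 a ha b hb t ht (Set.mem_sInter.1 hmem F hF)).2

lemma subset_minFace {S C : Set V} : S ⊆ minFace S C :=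
  Set.subset_sInter fun _ hF => hF.2

end FaceLemmas

section ExposedFace

variable {Y : Type*} [NormedAddCommGroup Y] [InnerProductSpace ℝ Y]

lemma inner_eq_zero_on_minFace {C : Set Y} (hconv : Convex ℝ C) {c x : Y}
    (hc : c ∈ polarCone C) (hxC : x ∈ C) (hcx : (inner ℝ c x : ℝ) = 0) :
    ∀ y ∈ minFace {x} C, (inner ℝ c y : ℝ) = 0 := by
  set G : Set Y := {y ∈ C | (inner ℝ c y : ℝ) = 0} with hG
  have hGface : IsFaceOf G C := by
    refine ⟨Set.sep_subset _ _, ?_, ?_⟩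
    · intro a ha b hb s t hs ht hst
      refine ⟨hconv ha.1 hb.1 hs ht hst, ?_⟩
      rw [inner_add_right, real_inner_smul_right, real_inner_smul_right, ha.2, hb.2]
      ring
    · intro a ha b hb t ht hmem
      have h0 : t * (inner ℝ c a : ℝ) + (1 - t) * (inner ℝ c b : ℝ) = 0 := by
        have := hmem.2
        rwa [inner_add_right, real_inner_smul_right, real_inner_smul_right] at this
      have h1 : 0 ≤ (inner ℝ c a : ℝ) := hc a ha
      have h2 : 0 ≤ (inner ℝ c b : ℝ) := hc b hb
      have ht1 : 0 < t := ht.1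
      have ht2 : 0 < 1 - t := by linarith [ht.2]
      exact ⟨⟨ha, by nlinarith⟩, ⟨hb, by nlinarith⟩⟩
  intro y hy
  have hsub : minFace {x} C ⊆ G :=
    Set.sInter_subset_of_mem ⟨hGface, Set.singleton_subset_iff.2 ⟨hxC, hcx⟩⟩
  exact (hsub hy).2

end ExposedFace


/-- Let `M : E → Y` be linear, `C ⊆ Y` a nice closed convex cone
(i.e. `C* + F^⊥` is closed for every face `F` of `C`), and
`x ∈ ri (C ∩ range M)`.  If `range M ⊆ span face(x, C)`, then `M* C*` is closed. -/
theorem image_closed_of_range_subset_span_face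
    {E Y : Type*} [NormedAddCommGroup E] [InnerProductSpace ℝ E]
    [FiniteDimensional ℝ E] [NormedAddCommGroup Y] [InnerProductSpace ℝ Y]
    [FiniteDimensional ℝ Y]
    (M : E →ₗ[ℝ] Y) (C : Set Y)
    (hconv : Convex ℝ C) (hcone : ∀ x ∈ C, ∀ t : ℝ, 0 ≤ t → t • x ∈ C)
    (hclosed : IsClosed C)
    (hnice : ∀ F : Set Y, IsFaceOf F C →
      IsClosed (polarCone C + {y : Y | ∀ x ∈ F, (inner ℝ y x : ℝ) = 0}))
    (x : Y) (hx : x ∈ intrinsicInterior ℝ (C ∩ Set.range M))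
    (hrange : Set.range M ⊆ (Submodule.span ℝ (minFace {x} C) : Set Y)) :
    IsClosed (LinearMap.adjoint M '' polarCone C) := by
  classical
  have hxmem : x ∈ C ∩ Set.range M := intrinsicInterior_subset hx
  have hxC : x ∈ C := hxmem.1
  obtain ⟨e, he⟩ := hxmem.2
  set F : Set Y := minFace {x} C with hFdef
  have hFace : IsFaceOf F C := minFace_isFaceOf hconv (Set.singleton_subset_iff.2 hxC)
  have hxF : x ∈ F := subset_minFace rfl
  set L : Submodule ℝ Y := Submodule.span ℝ F with hLdef
  set Fperp : Set Y := {y : Y | ∀ z ∈ F, (inner ℝ y z : ℝ) = 0} with hFperpdef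
  have hFperp_iff : ∀ y : Y, y ∈ Fperp ↔ y ∈ Lᗮ := by
    intro y
    rw [Submodule.mem_orthogonal']
    constructor
    · intro h u hu
      induction hu using Submodule.span_induction with
      | mem z hz => exact h z hz
      | zero => simp
      | add a b _ _ ha hb => rw [inner_add_right, ha, hb]; ring
      | smul t a _ ha => rw [real_inner_smul_right, ha]; ring
    · intro h z hz
      exact h z (Submodule.subset_span hz)
  have hKclosed : IsClosed (polarCone C + Fperp) := hnice F hFace
  set A := LinearMap.adjoint M with hAdef
  have hAF : ∀ y ∈ Fperp, A y = 0 := by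
    intro y hy
    have h1 : (inner ℝ (A y) (A y) : ℝ) = inner ℝ y (M (A y)) :=
      LinearMap.adjoint_inner_left M (A y) y
    have h2 : M (A y) ∈ L := hrange ⟨A y, rfl⟩
    have h3 : (inner ℝ (M (A y)) y : ℝ) = 0 :=
      (Submodule.mem_orthogonal L y).1 ((hFperp_iff y).1 hy) _ h2
    have h4 : (inner ℝ (A y) (A y) : ℝ) = 0 := by
      rw [h1, real_inner_comm]; exact h3
    exact inner_self_eq_zero.1 h4
  set K' : Set Y := (polarCone C + Fperp) ∩ (L : Set Y) with hK'def
  have himg : A '' polarCone C = A '' K' := by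
    apply Set.Subset.antisymm
    · rintro _ ⟨c, hc, rfl⟩
      set p : Y := (L.orthogonalProjectionOnto c : Y) with hp
      have hsub : c - p ∈ Lᗮ := Submodule.sub_starProjection_mem_orthogonal (K := L) c
      refine ⟨p, ⟨⟨c, hc, p - c, ?_, by module⟩, (L.orthogonalProjectionOnto c).2⟩, ?_⟩
      · exact (hFperp_iff _).2 (by simpa using Lᗮ.neg_mem hsub)
      · have h0 : A (c - p) = 0 := hAF _ ((hFperp_iff _).2 hsub)
        have h1 : A c - A p = 0 := by rw [← map_sub]; exact h0
        exact (sub_eq_zero.1 h1).symm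
    · rintro _ ⟨u, ⟨⟨cc, hcc, f, hf, rfl⟩, _⟩, rfl⟩
      exact ⟨cc, hcc, by rw [map_add, hAF f hf, add_zero]⟩
  rw [himg]
  refine isClosed_image_cone A K' (hKclosed.inter L.closed_of_finiteDimensional) ?_ ?_
  · rintro u ⟨⟨cc, hcc, f, hf, rfl⟩, huL⟩ t ht
    refine ⟨⟨t • cc, ?_, t • f, ?_, (smul_add t cc f).symm⟩, L.smul_mem t huL⟩
    · intro z hz
      rw [real_inner_smul_left]
      exact mul_nonneg ht (hcc z hz)
    · intro z hz
      rw [real_inner_smul_left, hf z hz, mul_zero]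
  · rintro u ⟨⟨cc, hcc, f, hf, rfl⟩, huL⟩ hAu
    have hux : (inner ℝ (cc + f) x : ℝ) = 0 := by
      have h1 : (inner ℝ (A (cc + f)) e : ℝ) = inner ℝ (cc + f) (M e) :=
        LinearMap.adjoint_inner_left M e (cc + f)
      rw [hAu, he] at h1
      simpa using h1.symm
    have hfx : (inner ℝ f x : ℝ) = 0 := hf x hxF
    have hccx : (inner ℝ cc x : ℝ) = 0 := by
      rw [inner_add_left, hfx] at hux
      linarith
    have hccF : cc ∈ Fperp := fun z hz =>
      inner_eq_zero_on_minFace hconv hcc hxC hccx z hz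
    have huFperp : cc + f ∈ Lᗮ :=
      Lᗮ.add_mem ((hFperp_iff cc).1 hccF) ((hFperp_iff f).1 hf)
    have : (inner ℝ (cc + f) (cc + f) : ℝ) = 0 :=
      (Submodule.mem_orthogonal' _ _).1 huFperp _ huL
    exact inner_self_eq_zero.1 this
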